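/- Let r, s be coprime positive integers with min{r,s} > 1 and suppose s > 2 (in particular this holds when 2 ∤ s or 4 ∣ s). Let n₁ be the least positive integer with r^(n₁) ≡ ±1 (mod s), and write r^(n₁) = s·f + δ₁ with δ₁ ∈ {1,−1} and f a positive integer. Let t > 1 be a positive integer each of whose prime divisors divides s, and let n' be a positive integer with r^(n') ≡ ±1 (mod s·t). If 2 ∤ s or 4 ∣ s, then n₁ divides n' and (t / gcd(t,f)) divides n'/n₁. -/

import Mathlib

theorem stmt_8 (r s t n₁ n' f : ℕ) (δ₁ : ℤ)
    (hr : 1 < r) (hs : 1 < s) (hrs : Nat.Coprime r s) (hs2 : 2 < s)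
    (hδ₁ : δ₁ = 1 ∨ δ₁ = -1) (hf : 0 < f)
    (hn₁pos : 0 < n₁)
    (heq : (r : ℤ) ^ n₁ = (s : ℤ) * f + δ₁)
    (hleast : ∀ n : ℕ, 0 < n →
      ((r : ℤ) ^ n ≡ 1 [ZMOD (s : ℤ)] ∨ (r : ℤ) ^ n ≡ -1 [ZMOD (s : ℤ)]) → n₁ ≤ n)
    (ht : 1 < t) (htdvd : ∀ p : ℕ, p.Prime → p ∣ t → p ∣ s)
    (hn' : 0 < n')
    (hmod : (r : ℤ) ^ n' ≡ 1 [ZMOD ((s : ℤ) * t)] ∨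
            (r : ℤ) ^ n' ≡ -1 [ZMOD ((s : ℤ) * t)])
    (hcase : ¬ 2 ∣ s ∨ 4 ∣ s) :
    n₁ ∣ n' ∧ (t / Nat.gcd t f) ∣ (n' / n₁) := by
  obtain ⟨ε, hε, hmodε⟩ : ∃ ε : ℤ, (ε = 1 ∨ ε = -1) ∧
      (r : ℤ) ^ n' ≡ ε [ZMOD ((s : ℤ) * t)] := by
    rcases hmod with h | h
    · exact ⟨1, Or.inl rfl, h⟩
    · exact ⟨-1, Or.inr rfl, h⟩
  have hδsq : δ₁ * δ₁ = 1 := by rcases hδ₁ with rfl | rfl <;> norm_num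
  have hδpow : ∀ k : ℕ, δ₁ ^ k = 1 ∨ δ₁ ^ k = -1 := by
    intro k
    rcases hδ₁ with rfl | rfl
    · left; simp
    · rcases Nat.even_or_odd k with h | h
      · left; exact h.neg_one_pow
      · right; exact h.neg_one_pow
  have hmods : (r : ℤ) ^ n' ≡ ε [ZMOD (s : ℤ)] := hmodε.of_dvd (dvd_mul_right _ _)
  have hbase : (r : ℤ) ^ n₁ ≡ δ₁ [ZMOD (s : ℤ)] := by
    rw [heq]
    have h0 : (s : ℤ) ≡ 0 [ZMOD (s : ℤ)] := (Int.modEq_zero_iff_dvd).mpr dvd_rfl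
    calc (s : ℤ) * f + δ₁ ≡ 0 * f + δ₁ [ZMOD (s : ℤ)] := (h0.mul_right _).add_right _
      _ = δ₁ := by ring
  -- Step 1 : n₁ ∣ n'
  have hdvd : n₁ ∣ n' := by
    by_contra hnd
    set ρ := n' % n₁ with hρ
    have hρpos : 0 < ρ := Nat.pos_of_ne_zero fun h => hnd (Nat.dvd_of_mod_eq_zero h)
    have hρlt : ρ < n₁ := Nat.mod_lt _ hn₁pos
    set q := n' / n₁ with hq
    have hsplit : n' = n₁ * q + ρ := (Nat.div_add_mod n' n₁).symm
    have h1 : (r : ℤ) ^ n' = ((r : ℤ) ^ n₁) ^ q * (r : ℤ) ^ ρ := by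
      rw [← pow_mul, ← pow_add, ← hsplit]
    have h2 : (r : ℤ) ^ n' ≡ δ₁ ^ q * (r : ℤ) ^ ρ [ZMOD (s : ℤ)] := by
      rw [h1]; exact (hbase.pow q).mul_right _
    have h3 : δ₁ ^ q * (r : ℤ) ^ ρ ≡ ε [ZMOD (s : ℤ)] := h2.symm.trans hmods
    have hqq : δ₁ ^ q * δ₁ ^ q = 1 := by rw [← mul_pow, hδsq, one_pow]
    have h4 : (r : ℤ) ^ ρ ≡ δ₁ ^ q * ε [ZMOD (s : ℤ)] := by
      have h5 := h3.mul_left (δ₁ ^ q)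
      calc (r : ℤ) ^ ρ = δ₁ ^ q * (δ₁ ^ q * (r : ℤ) ^ ρ) := by
            rw [← mul_assoc, hqq, one_mul]
        _ ≡ δ₁ ^ q * ε [ZMOD (s : ℤ)] := h5
    have h6 : δ₁ ^ q * ε = 1 ∨ δ₁ ^ q * ε = -1 := by
      rcases hδpow q with h | h <;> rcases hε with rfl | rfl <;> simp [h]
    have h7 : (r : ℤ) ^ ρ ≡ 1 [ZMOD (s : ℤ)] ∨ (r : ℤ) ^ ρ ≡ -1 [ZMOD (s : ℤ)] := by
      rcases h6 with h | h
      · exact Or.inl (h ▸ h4)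
      · exact Or.inr (h ▸ h4)
    have := hleast ρ hρpos h7
    omega
  obtain ⟨m, hm⟩ := hdvd
  have hm0 : m ≠ 0 := by rintro rfl; simp [hm] at hn'
  have hmdiv : n' / n₁ = m := by rw [hm, Nat.mul_div_cancel_left _ hn₁pos]
  refine ⟨⟨m, hm⟩, ?_⟩
  rw [hmdiv]
  -- Step 2 : s*t ∣ x^m - δ₁^m  where x = s*f + δ₁
  set x : ℤ := (s : ℤ) * f + δ₁ with hx
  have hpowm : x ^ m = (r : ℤ) ^ n' := by rw [← heq, ← pow_mul, ← hm]
  have hδm : δ₁ ^ m = ε := by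
    have hmm : δ₁ ^ m ≡ ε [ZMOD (s : ℤ)] := by
      have : x ^ m ≡ δ₁ ^ m [ZMOD (s : ℤ)] := by
        have : x ≡ δ₁ [ZMOD (s : ℤ)] := heq ▸ hbase
        exact this.pow m
      exact this.symm.trans (hpowm ▸ hmods)
    have hd := hmm.dvd
    have h2 : ¬ (s : ℤ) ∣ 2 := by
      intro hh
      have : s ∣ 2 := by exact_mod_cast hh
      have := Nat.le_of_dvd (by norm_num) this
      omega
    rcases hδpow m with h | h <;> rcases hε with rfl | rfl <;> rw [h] at hd ⊢
    · exact absurd (by rw [show (-1 - 1 : ℤ) = -2 by norm_num] at hd; exact dvd_neg.mp hd) h2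
    · exact absurd (by rw [show ((1:ℤ) - -1 : ℤ) = 2 by norm_num] at hd; exact hd) h2
  have hD : ((s : ℤ) * t) ∣ (x ^ m - δ₁ ^ m) := by
    rw [hδm, hpowm]
    exact dvd_sub_comm.mp hmodε.dvd
  -- Step 3 : t / gcd t f ∣ m  via prime factorizations
  have hs0 : s ≠ 0 := by omega
  have ht0 : t ≠ 0 := by omega
  have hf0 : f ≠ 0 := by omega
  set g := Nat.gcd t f with hg
  have hgt : g ∣ t := Nat.gcd_dvd_left t f
  have hg0 : g ≠ 0 := Nat.gcd_ne_zero_left ht0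
  have htg0 : t / g ≠ 0 := by
    have := Nat.div_pos (Nat.le_of_dvd (by omega) hgt) (Nat.pos_of_ne_zero hg0)
    omega
  refine (Nat.factorization_le_iff_dvd htg0 hm0).mp ?_
  refine Finsupp.le_def.mpr fun p => ?_
  by_cases hp : p.Prime
  swap
  · simp [Nat.factorization_eq_zero_of_not_prime _ hp]
  by_cases hpt : p ∣ t
  swap
  · have h1 : (t / g).factorization p = 0 := by
      apply Nat.factorization_eq_zero_of_not_dvd
      exact fun h => hpt (h.trans (Nat.div_dvd_of_dvd hgt))
    simp [h1]
  -- main case : p prime, p ∣ t, so p ∣ s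
  have hps : p ∣ s := htdvd p hp hpt
  have hpr : ¬ p ∣ r := by
    intro h
    have := Nat.dvd_gcd h hps
    rw [hrs] at this
    exact hp.one_lt.ne' (Nat.dvd_one.mp this)
  have hnotx : ¬ (p : ℤ) ∣ x := by
    rw [← heq]
    intro h
    have : (p : ℤ) ∣ (r : ℤ) := ((Nat.prime_iff_prime_int.mp hp).dvd_of_dvd_pow h)
    exact hpr (by exact_mod_cast this)
  have hxd : x - δ₁ = (s : ℤ) * f := by ring
  have hpxy : (p : ℤ) ∣ x - δ₁ := by
    rw [hxd]
    exact dvd_mul_of_dvd_left (Int.natCast_dvd_natCast.mpr hps) _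
  -- LTE
  have hLTE : emultiplicity (p : ℤ) (x ^ m - δ₁ ^ m)
      = emultiplicity (p : ℤ) (x - δ₁) + emultiplicity p m := by
    rcases hp.eq_two_or_odd' with rfl | hodd
    · have h4s : 4 ∣ s := by
        rcases hcase with h | h
        · exact absurd hps h
        · exact h
      have h4 : (4 : ℤ) ∣ x - δ₁ := by
        rw [hxd]
        exact dvd_mul_of_dvd_left (by exact_mod_cast (h4s : 4 ∣ s)) _
      have h2this := Int.two_pow_sub_pow' (x := x) (y := δ₁) m h4 (by exact_mod_cast hnotx)
      have h2m : emultiplicity (2 : ℤ) (m : ℤ) = emultiplicity 2 m := by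
        exact_mod_cast Int.natCast_emultiplicity 2 m
      rw [h2m] at h2this
      exact_mod_cast h2this
    · exact Int.emultiplicity_pow_sub_pow hp hodd hpxy hnotx m
  -- convert to factorizations
  have hfinm : FiniteMultiplicity p m := Nat.finiteMultiplicity_iff.mpr ⟨hp.ne_one, Nat.pos_of_ne_zero hm0⟩
  have hem : emultiplicity p m = (m.factorization p : ℕ∞) := by
    rw [hfinm.emultiplicity_eq_multiplicity, Nat.multiplicity_eq_factorization hp hm0]
  have hsf0 : s * f ≠ 0 := mul_ne_zero hs0 hf0
  have hfinsf : FiniteMultiplicity p (s * f) :=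
    Nat.finiteMultiplicity_iff.mpr ⟨hp.ne_one, Nat.pos_of_ne_zero hsf0⟩
  have hesf : emultiplicity (p : ℤ) (x - δ₁) = ((s * f).factorization p : ℕ∞) := by
    rw [hxd, show ((s:ℤ) * f) = ((s * f : ℕ) : ℤ) by push_cast; ring,
      Int.natCast_emultiplicity, hfinsf.emultiplicity_eq_multiplicity,
      Nat.multiplicity_eq_factorization hp hsf0]
  -- lower bound on emultiplicity of D
  have hple : ((s.factorization p + t.factorization p : ℕ) : ℕ∞)
      ≤ emultiplicity (p : ℤ) (x ^ m - δ₁ ^ m) := by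
    apply le_emultiplicity_of_pow_dvd
    have h1 : (p : ℤ) ^ (s.factorization p + t.factorization p) ∣ (s : ℤ) * t := by
      rw [pow_add]
      exact mul_dvd_mul (by exact_mod_cast Nat.ordProj_dvd s p)
        (by exact_mod_cast Nat.ordProj_dvd t p)
    exact h1.trans hD
  rw [hLTE, hesf, hem] at hple
  have hkey : s.factorization p + t.factorization p
      ≤ (s * f).factorization p + m.factorization p := by
    exact_mod_cast hple
  rw [Nat.factorization_mul hs0 hf0, Finsupp.add_apply] at hkey
  have hfact : (t / g).factorization p = t.factorization p - g.factorization p := by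
    rw [Nat.factorization_div hgt]; rfl
  have hgmin : g.factorization p = min (t.factorization p) (f.factorization p) := by
    rw [hg, Nat.factorization_gcd ht0 hf0]; rfl
  rw [hfact, hgmin]
  omega
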